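/- arXiv:1912.05443 — 3 statements merged into one kernel-verified Lean document; each statement's English description precedes it below -/
import Mathlib

section
/- Let D_0, D_1, D_2, D_3 be integers with D_0 + D_1 + D_2 + D_3 = 0. Then there exists an index i ∈ Z/4 such that D_i ≤ 0, D_{i+1} ≥ 0, and D_{i+1} + D_{i+2} ≥ 0 (indices mod 4). -/
/-- core of Lemma 7: if integers `D₀, D₁, D₂, D₃` sum to zero, then there
is `i ∈ ℤ/4` with `Dᵢ ≤ 0`, `D_(i+1) ≥ 0` and `D_(i+1) + D_(i+2) ≥ 0` (indices mod 4). -/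
theorem ring_balance (D : ZMod 4 → ℤ) (h : D 0 + D 1 + D 2 + D 3 = 0) :
    ∃ i : ZMod 4, D i ≤ 0 ∧ 0 ≤ D (i + 1) ∧ 0 ≤ D (i + 1) + D (i + 2) := by
  set a := D 0; set b := D 1; set c := D 2; set d := D 3
  have key : (a ≤ 0 ∧ 0 ≤ b ∧ 0 ≤ b + c) ∨ (b ≤ 0 ∧ 0 ≤ c ∧ 0 ≤ c + d) ∨
      (c ≤ 0 ∧ 0 ≤ d ∧ 0 ≤ d + a) ∨ (d ≤ 0 ∧ 0 ≤ a ∧ 0 ≤ a + b) := by omega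
  rcases key with h'|h'|h'|h'
  · exact ⟨0, by simpa using h'⟩
  · exact ⟨1, by simpa [show (1:ZMod 4) + 1 = 2 from rfl, show (1:ZMod 4) + 2 = 3 from rfl] using h'⟩
  · exact ⟨2, by simpa [show (2:ZMod 4) + 1 = 3 from rfl, show (2:ZMod 4) + 2 = 0 from rfl] using h'⟩
  · exact ⟨3, by simpa [show (3:ZMod 4) + 1 = 0 from rfl, show (3:ZMod 4) + 2 = 1 from rfl] using h'⟩
end

section
/- Every vertex of BH_{n-1}^i (the subcube of BH_n with (n-1)-th coordinate equal to i) has exactly two neighbors outside BH_{n-1}^i: if its inner index is even, both lie in BH_{n-1}^{i+1}; if its inner index is odd, both lie in BH_{n-1}^{i-1} (indices mod 4). -/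
/-- The neighbor rule of the balanced hypercube `BH n`: `v` is a neighbor of `u`
if `v` is obtained from `u` by changing the inner index `a₀` to `a₀ ± 1 (mod 4)`,
possibly also changing one outer coordinate `aᵢ` (`i ≠ 0`) to `aᵢ + (-1)^{a₀} (mod 4)`. -/
def bhRule (n : ℕ) (u v : Fin n → ZMod 4) : Prop :=
  ∃ hn : 0 < n,
    (v ⟨0, hn⟩ = u ⟨0, hn⟩ + 1 ∨ v ⟨0, hn⟩ = u ⟨0, hn⟩ - 1) ∧
    ((∀ i, i ≠ ⟨0, hn⟩ → v i = u i) ∨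
      ∃ i, i ≠ ⟨0, hn⟩ ∧
        v i = u i + (if (u ⟨0, hn⟩).val % 2 = 0 then 1 else -1) ∧
        ∀ j, j ≠ ⟨0, hn⟩ → j ≠ i → v j = u j)

/-- The balanced hypercube `BH n`, as a simple graph on `(ZMod 4)^n`. -/
def BH (n : ℕ) : SimpleGraph (Fin n → ZMod 4) where
  Adj u v := u ≠ v ∧ (bhRule n u v ∨ bhRule n v u)
  symm := ⟨fun u v h => ⟨h.1.symm, h.2.symm⟩⟩
  loopless := ⟨fun u h => h.1 rfl⟩

private lemma zmod4_parity_neg (x y : ZMod 4) (h : x = y + 1 ∨ x = y - 1) :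
    (if x.val % 2 = 0 then (1 : ZMod 4) else -1) = -(if y.val % 2 = 0 then 1 else -1) := by
  revert h; revert x; revert y; decide

private lemma zmod4_add_one_ne (x : ZMod 4) : x + 1 ≠ x := by revert x; decide
private lemma zmod4_sub_one_ne (x : ZMod 4) : x - 1 ≠ x := by revert x; decide
private lemma zmod4_add_ne_sub (x : ZMod 4) : x + 1 ≠ x - 1 := by revert x; decide

/-- every vertex of the subcube `BH_(n-1)^i` of `BH n` (vertices whose
`(n-1)`-th coordinate equals `i`) has exactly two neighbors outside the subcube; if its
inner index is even both lie in `BH_(n-1)^(i+1)`, and if its inner index is odd both lie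
in `BH_(n-1)^(i-1)` (indices mod 4). -/
theorem bh_crossing_neighbors (n : ℕ) (hn : 2 ≤ n) (i : ZMod 4)
    (u : Fin n → ZMod 4) (hu : u ⟨n - 1, by omega⟩ = i) :
    Nat.card {v : Fin n → ZMod 4 // (BH n).Adj u v ∧ v ⟨n - 1, by omega⟩ ≠ i} = 2 ∧
    ∀ v : Fin n → ZMod 4, (BH n).Adj u v → v ⟨n - 1, by omega⟩ ≠ i →
      (((u ⟨0, by omega⟩).val % 2 = 0 → v ⟨n - 1, by omega⟩ = i + 1) ∧
       ((u ⟨0, by omega⟩).val % 2 = 1 → v ⟨n - 1, by omega⟩ = i - 1)) := by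
  have h0 : (0 : ℕ) < n := by omega
  have hl : n - 1 < n := by omega
  -- abbreviations
  have hzne : (⟨0, h0⟩ : Fin n) ≠ ⟨n - 1, hl⟩ := by
    simp only [ne_eq, Fin.mk.injEq]; omega
  set s : ZMod 4 := if (u ⟨0, h0⟩).val % 2 = 0 then 1 else -1 with hs
  have hs_ne : ∀ x : ZMod 4, x + s ≠ x := by
    intro x
    rcases (ite_eq_or_eq ((u ⟨0, h0⟩).val % 2 = 0) (1 : ZMod 4) (-1)) with h | h <;>
      rw [hs, h]
    · exact zmod4_add_one_ne x
    · simpa [sub_eq_add_neg] using zmod4_sub_one_ne x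
  -- the two crossing neighbors
  set w : ZMod 4 → (Fin n → ZMod 4) := fun e k =>
    if k = (⟨0, h0⟩ : Fin n) then u k + e
    else if k = (⟨n - 1, hl⟩ : Fin n) then i + s
    else u k with hw
  have hw0 : ∀ e, w e ⟨0, h0⟩ = u ⟨0, h0⟩ + e := by intro e; simp [hw]
  have hwl : ∀ e, w e ⟨n - 1, hl⟩ = i + s := by
    intro e; simp [hw, hzne.symm]
  have hwk : ∀ e, ∀ k : Fin n, k ≠ ⟨0, h0⟩ → k ≠ ⟨n - 1, hl⟩ → w e k = u k := by
    intro e k h1 h2; simp [hw, h1, h2]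
  -- key characterization
  have key : ∀ v : Fin n → ZMod 4,
      ((BH n).Adj u v ∧ v ⟨n - 1, hl⟩ ≠ i) ↔ (v = w 1 ∨ v = w (-1)) := by
    intro v
    constructor
    · rintro ⟨⟨hne, hadj⟩, hvl⟩
      rcases hadj with ⟨hn', hv0, hrest⟩ | ⟨hn', hv0, hrest⟩
      · -- bhRule u v
        rcases hrest with hall | ⟨j, hj0, hjv, hother⟩
        · exact absurd ((hall ⟨n - 1, hl⟩ hzne.symm).trans hu) hvl
        · by_cases hj : j = (⟨n - 1, hl⟩ : Fin n)
          · subst hj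
            have hvleq : v ⟨n - 1, hl⟩ = i + s := by rw [hjv, hu]
            rcases hv0 with h | h
            · left
              funext k
              by_cases hk0 : k = (⟨0, h0⟩ : Fin n)
              · subst hk0; rw [hw0, h]
              · by_cases hkl : k = (⟨n - 1, hl⟩ : Fin n)
                · subst hkl; rw [hwl, hvleq]
                · rw [hwk _ _ hk0 hkl, hother k hk0 hkl]
            · right
              funext k
              by_cases hk0 : k = (⟨0, h0⟩ : Fin n)
              · subst hk0; rw [hw0, h]; try ring
              · by_cases hkl : k = (⟨n - 1, hl⟩ : Fin n)
                · subst hkl; rw [hwl, hvleq]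
                · rw [hwk _ _ hk0 hkl, hother k hk0 hkl]
          · exact absurd ((hother ⟨n - 1, hl⟩ hzne.symm (Ne.symm hj)).trans hu) hvl
      · -- bhRule v u
        rcases hrest with hall | ⟨j, hj0, hjv, hother⟩
        · exact absurd (((hall ⟨n - 1, hl⟩ hzne.symm).symm).trans hu) hvl
        · by_cases hj : j = (⟨n - 1, hl⟩ : Fin n)
          · subst hj
            have hparity : (if (v ⟨0, h0⟩).val % 2 = 0 then (1 : ZMod 4) else -1) = -s := by
              have h2 := zmod4_parity_neg (u ⟨0, h0⟩) (v ⟨0, h0⟩) hv0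
              rw [hs, h2, neg_neg]
            have hvleq : v ⟨n - 1, hl⟩ = i + s := by
              have := hjv
              rw [hparity] at this
              have : u ⟨n - 1, hl⟩ = v ⟨n - 1, hl⟩ - s := by rw [this]; ring
              rw [hu] at this
              rw [eq_sub_iff_add_eq] at this
              exact this.symm
            rcases hv0 with h | h
            · right
              have hv0' : v ⟨0, h0⟩ = u ⟨0, h0⟩ + (-1) := by rw [h]; ring
              funext k
              by_cases hk0 : k = (⟨0, h0⟩ : Fin n)
              · subst hk0; rw [hw0, hv0']
              · by_cases hkl : k = (⟨n - 1, hl⟩ : Fin n)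
                · subst hkl; rw [hwl, hvleq]
                · rw [hwk _ _ hk0 hkl, (hother k hk0 hkl).symm]
            · left
              have hv0' : v ⟨0, h0⟩ = u ⟨0, h0⟩ + 1 := by rw [h]; ring
              funext k
              by_cases hk0 : k = (⟨0, h0⟩ : Fin n)
              · subst hk0; rw [hw0, hv0']
              · by_cases hkl : k = (⟨n - 1, hl⟩ : Fin n)
                · subst hkl; rw [hwl, hvleq]
                · rw [hwk _ _ hk0 hkl, (hother k hk0 hkl).symm]
          · exact absurd (((hother ⟨n - 1, hl⟩ hzne.symm (Ne.symm hj)).symm).trans hu) hvl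
    · -- backward
      rintro (h | h)
      all_goals
        subst h
        refine ⟨⟨?_, Or.inl ⟨h0, ?_, Or.inr ⟨⟨n - 1, hl⟩, hzne.symm, ?_, ?_⟩⟩⟩, ?_⟩
      · intro hEq
        exact zmod4_add_one_ne (u ⟨0, h0⟩) (by rw [← hw0 1, ← hEq])
      · left; exact hw0 1
      · rw [hwl, hu]
      · intro k hk0 hkl; exact hwk _ _ hk0 hkl
      · rw [hwl]; exact fun hc => hs_ne i hc
      · intro hEq
        have : u ⟨0, h0⟩ - 1 = u ⟨0, h0⟩ := by
          rw [sub_eq_add_neg, ← hw0 (-1), ← hEq]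
        exact zmod4_sub_one_ne (u ⟨0, h0⟩) this
      · right; rw [hw0]; ring
      · rw [hwl, hu]
      · intro k hk0 hkl; exact hwk _ _ hk0 hkl
      · rw [hwl]; exact fun hc => hs_ne i hc
  have hw1ne : w 1 ≠ w (-1) := by
    intro hEq
    have h1 := congrFun hEq ⟨0, h0⟩
    rw [hw0, hw0] at h1
    exact zmod4_add_ne_sub (u ⟨0, h0⟩) (by rw [h1]; ring)
  constructor
  · have hset : {v : Fin n → ZMod 4 | (BH n).Adj u v ∧ v ⟨n - 1, hl⟩ ≠ i}
        = {w 1, w (-1)} := by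
      ext v; simpa using key v
    calc Nat.card {v : Fin n → ZMod 4 // (BH n).Adj u v ∧ v ⟨n - 1, hl⟩ ≠ i}
        = Nat.card ({w 1, w (-1)} : Set (Fin n → ZMod 4)) := by rw [← hset]; rfl
      _ = ({w 1, w (-1)} : Set (Fin n → ZMod 4)).ncard := Nat.card_coe_set_eq _
      _ = 2 := Set.ncard_pair hw1ne
  · intro v hadj hvl
    have hv := (key v).mp ⟨hadj, hvl⟩
    have hvleq : v ⟨n - 1, hl⟩ = i + s := by
      rcases hv with h | h <;> (subst h; exact hwl _)
    constructor
    · intro hpar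
      rw [hvleq, hs, if_pos hpar]
    · intro hpar
      rw [hvleq, hs, if_neg (by omega), sub_eq_add_neg]
end

section
/- In any graph G, if two vertices u and u' have the same neighborhood N of size 2n, and P_1, ..., P_k are vertex-disjoint paths covering all vertices of G with all endpoints outside {u, u'}, and at least 2n-1 vertices of N are endpoints of the paths, then k cannot exist covering both u and u' (i.e., if every vertex of N except at most one is a path endpoint, then u and u' cannot both be internal vertices of the paths). -/
/-- `v` is adjacent to `x` along the list `L` (consecutive entries). -/
private def sn {α : Type*} (L : List α) (x v : α) : Prop :=
  ∃ m : ℕ, (L[m]? = some x ∧ L[m+1]? = some v) ∨ (L[m]? = some v ∧ L[m+1]? = some x)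

private lemma sn_symm {α : Type*} {L : List α} {x v : α} (h : sn L x v) : sn L v x := by
  obtain ⟨m, h | h⟩ := h
  · exact ⟨m, Or.inr h⟩
  · exact ⟨m, Or.inl h⟩

private lemma sn_mem {α : Type*} {L : List α} {x v : α} (h : sn L x v) : v ∈ L := by
  obtain ⟨m, ⟨_, h⟩ | ⟨h, _⟩⟩ := h
  · exact List.mem_of_getElem? h
  · exact List.mem_of_getElem? h

private lemma sn_adj {α : Type*} {R : α → α → Prop} (hs : ∀ a b, R a b → R b a)
    {L : List α} (hc : List.Chain' R L) {x v : α} (h : sn L x v) : R x v := by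
  have key : ∀ m (a b : α), L[m]? = some a → L[m+1]? = some b → R a b := by
    intro m a b ha hb
    obtain ⟨hm1, hb'⟩ := List.getElem?_eq_some_iff.mp hb
    obtain ⟨hm, ha'⟩ := List.getElem?_eq_some_iff.mp ha
    have := List.IsChain.getElem hc m (by omega)
    rw [ha', hb'] at this
    exact this
  obtain ⟨m, ⟨ha, hb⟩ | ⟨ha, hb⟩⟩ := h
  · exact key m x v ha hb
  · exact hs _ _ (key m v x ha hb)

private lemma internal_two_nbrs {α : Type*} {L : List α} (hnd : L.Nodup) (hne : L ≠ [])
    {x : α} (hx : x ∈ L) (hh : x ≠ L.head hne) (hl : x ≠ L.getLast hne) :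
    ∃ a b, a ≠ b ∧ sn L x a ∧ sn L x b := by
  obtain ⟨m, hm, hmx⟩ := List.getElem_of_mem hx
  have hhead : L.head hne = L[0]'(by cases L with | nil => simp at hne | cons => simp) :=
    (L.head_eq_getElem hne)
  have hlast : L.getLast hne = L[L.length - 1]'(by
      have : 0 < L.length := List.length_pos_iff.mpr hne
      omega) := L.getLast_eq_getElem hne
  have hm0 : m ≠ 0 := by
    rintro rfl; exact hh (hmx ▸ hhead.symm ▸ rfl)
  have hml : m ≠ L.length - 1 := by
    intro h; apply hl; rw [hlast]; subst h; exact hmx.symm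
  have hm1 : m + 1 < L.length := by omega
  have hm2 : m - 1 < L.length := by omega
  refine ⟨L[m-1], L[m+1], ?_, ?_, ?_⟩
  · intro h
    have := hnd.getElem_inj_iff.mp h
    omega
  · exact ⟨m - 1, Or.inr ⟨List.getElem?_eq_getElem hm2, by
      have : m - 1 + 1 = m := by omega
      rw [this, List.getElem?_eq_getElem hm, hmx]⟩⟩
  · exact ⟨m, Or.inl ⟨by rw [List.getElem?_eq_getElem hm, hmx],
      List.getElem?_eq_getElem hm1⟩⟩

private lemma last_unique_nbr {α : Type*} {L : List α} (hnd : L.Nodup) (hne : L ≠ [])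
    {v w : α} (hv : sn L (L.getLast hne) v) (hw : sn L (L.getLast hne) w) : v = w := by
  have hlen : 0 < L.length := List.length_pos_iff.mpr hne
  have hlast : L.getLast hne = L[L.length - 1]'(by omega) := L.getLast_eq_getElem hne
  have key : ∀ y : α, sn L (L.getLast hne) y →
      ∃ h : L.length - 1 - 1 < L.length, y = L[L.length - 1 - 1] := by
    intro y hy
    obtain ⟨m, ⟨ha, hb⟩ | ⟨ha, hb⟩⟩ := hy
    · obtain ⟨hm, ha'⟩ := List.getElem?_eq_some_iff.mp ha
      have : m = L.length - 1 := by
        apply hnd.getElem_inj_iff.mp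
        rw [ha']; exact hlast
      obtain ⟨hm1, _⟩ := List.getElem?_eq_some_iff.mp hb
      omega
    · obtain ⟨hm1, hb'⟩ := List.getElem?_eq_some_iff.mp hb
      have hmv : m + 1 = L.length - 1 := by
        apply hnd.getElem_inj_iff.mp
        rw [hb']; exact hlast
      obtain ⟨hm, ha'⟩ := List.getElem?_eq_some_iff.mp ha
      refine ⟨by omega, ?_⟩
      rw [← ha']
      congr 1
      omega
  obtain ⟨_, hv'⟩ := key v hv
  obtain ⟨_, hw'⟩ := key w hw
  rw [hv', hw']

/-- in any graph `G`, if `u ≠ u'` have the same neighborhood `N` of size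
`2n`, `T` is a set of `2n-1` common neighbors of `u` and `u'` (the sinks), and
`u, u' ∉ S ∪ T`, then no family of `2n-1` vertex-disjoint paths from the sources `S` to
the sinks `T` can cover both `u` and `u'`. -/
theorem same_neighborhood_dpc_obstruction {V : Type*} (G : SimpleGraph V)
    (u u' : V) (hne : u ≠ u') (hN : G.neighborSet u = G.neighborSet u')
    (n : ℕ) (hNcard : Nat.card (G.neighborSet u) = 2 * n)
    (S T : Finset V) (hT : T.card = 2 * n - 1) (hTN : ↑T ⊆ G.neighborSet u)
    (huST : u ∉ S ∧ u ∉ T) (hu'ST : u' ∉ S ∧ u' ∉ T)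
    (s t : Fin (2 * n - 1) → V) (P : ∀ i, G.Walk (s i) (t i))
    (hpath : ∀ i, (P i).IsPath)
    (hsS : Set.range s = ↑S) (htT : Set.range t = ↑T)
    (hdisj : ∀ i j, i ≠ j → ∀ v, v ∈ (P i).support → v ∉ (P j).support)
    (hu : ∃ i, u ∈ (P i).support) (hu' : ∃ i, u' ∈ (P i).support) :
    False := by
  obtain ⟨i, hui⟩ := hu
  obtain ⟨i', hui'⟩ := hu'
  have hn1 : 1 ≤ n := by
    have := i.pos; omega
  -- the neighborhood is finite with one non-sink vertex
  have hfinsub : Finite ↥(G.neighborSet u) := by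
    rcases Nat.card_ne_zero.mp (by omega : Nat.card ↥(G.neighborSet u) ≠ 0) with ⟨_, hf⟩
    exact hf
  have hfin : (G.neighborSet u).Finite := Set.finite_coe_iff.mp hfinsub
  have hNn : (G.neighborSet u).ncard = 2 * n := by
    rw [← Nat.card_coe_set_eq]; exact hNcard
  have hdiff : ((G.neighborSet u) \ ↑T).ncard = 1 := by
    rw [Set.ncard_diff hTN (T.finite_toSet), Set.ncard_coe_finset, hNn, hT]; omega
  obtain ⟨x, hx⟩ := Set.ncard_eq_one.mp hdiff
  -- a vertex of T lying on path j must be the sink t j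
  have hT_end : ∀ (j : Fin (2 * n - 1)) (w : V), w ∈ T → w ∈ (P j).support → w = t j := by
    intro j w hwT hwj
    have : w ∈ Set.range t := by rw [htT]; exact_mod_cast hwT
    obtain ⟨k, hk⟩ := this
    by_cases hkj : k = j
    · rw [← hk, hkj]
    · exact absurd hwj (hk ▸ hdisj k j hkj (t k) ((P k).end_mem_support))
  -- main claim: an internal vertex y with neighborhood N on path j is sn-adjacent
  -- to both x and the sink t j
  have main : ∀ (j : Fin (2 * n - 1)) (y : V), y ∈ (P j).support → y ∉ S → y ∉ T →
      G.neighborSet y = G.neighborSet u →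
      sn (P j).support y x ∧ sn (P j).support y (t j) := by
    intro j y hyj hyS hyT hNy
    set L := (P j).support with hL
    have hnd : L.Nodup := (hpath j).support_nodup
    have hneL : L ≠ [] := (P j).support_ne_nil
    have hhead : L.head hneL = s j := (P j).head_support
    have hlast : L.getLast hneL = t j := (P j).getLast_support
    have hyh : y ≠ L.head hneL := by
      rw [hhead]; rintro rfl
      exact hyS (by have : s j ∈ Set.range s := ⟨j, rfl⟩; rw [hsS] at this; exact_mod_cast this)
    have hyl : y ≠ L.getLast hneL := by
      rw [hlast]; rintro rfl
      exact hyT (by have : t j ∈ Set.range t := ⟨j, rfl⟩; rw [htT] at this; exact_mod_cast this)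
    obtain ⟨a, b, hab, ha, hb⟩ := internal_two_nbrs hnd hneL hyj hyh hyl
    have haN : a ∈ G.neighborSet u := by
      rw [← hNy]
      exact sn_adj (fun _ _ h => G.adj_symm h) ((P j).isChain_adj_support) ha
    have hbN : b ∈ G.neighborSet u := by
      rw [← hNy]
      exact sn_adj (fun _ _ h => G.adj_symm h) ((P j).isChain_adj_support) hb
    have hnotboth : ¬ (a ∈ T ∧ b ∈ T) := by
      rintro ⟨haT, hbT⟩
      exact hab ((hT_end j a haT (sn_mem ha)).trans (hT_end j b hbT (sn_mem hb)).symm)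
    have hnotneither : ¬ (a ∉ T ∧ b ∉ T) := by
      rintro ⟨haT, hbT⟩
      have h1 : a ∈ ({x} : Set V) := hx ▸ ⟨haN, by exact_mod_cast haT⟩
      have h2 : b ∈ ({x} : Set V) := hx ▸ ⟨hbN, by exact_mod_cast hbT⟩
      exact hab (h1.trans h2.symm)
    by_cases haT : a ∈ T
    · have hbT : b ∉ T := fun h => hnotboth ⟨haT, h⟩
      have hbx : b = x := by
        have : b ∈ ({x} : Set V) := hx ▸ ⟨hbN, by exact_mod_cast hbT⟩
        exact this
      exact ⟨hbx ▸ hb, (hT_end j a haT (sn_mem ha)) ▸ ha⟩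
    · have hbT : b ∈ T := by by_contra h; exact hnotneither ⟨haT, h⟩
      have hax : a = x := by
        have : a ∈ ({x} : Set V) := hx ▸ ⟨haN, by exact_mod_cast haT⟩
        exact this
      exact ⟨hax ▸ ha, (hT_end j b hbT (sn_mem hb)) ▸ hb⟩
  obtain ⟨hux, hut⟩ := main i u hui huST.1 huST.2 rfl
  obtain ⟨hu'x, hu't⟩ := main i' u' hui' hu'ST.1 hu'ST.2 hN.symm
  -- x lies on both paths, so i = i'
  have hii : i = i' := by
    by_contra h
    exact hdisj i i' h x (sn_mem hux) (sn_mem hu'x)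
  subst hii
  -- both u and u' are sn-adjacent to the sink t i, contradiction
  have hlast : (P i).support.getLast (P i).support_ne_nil = t i := (P i).getLast_support
  have : u = u' := by
    apply last_unique_nbr ((hpath i).support_nodup) ((P i).support_ne_nil)
      (v := u) (w := u') <;> rw [hlast]
    · exact sn_symm hut
    · exact sn_symm hu't
  exact hne this
end
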